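/- arXiv:1511.01075 — 2 statements merged into one kernel-verified Lean document; each statement's English description precedes it below -/
import Mathlib

section
/- Let 𝔽 be an infinite field of characteristic p ≠ 2 and d ≥ 1. If tr(X₁⁻ X₂⁻ ⋯ X_d⁻) is decomposable in R₋^{O(n)} (i.e., lies in the 𝔽-span of products g·h with g, h ∈ R₋^{O(n)} homogeneous of positive degree), then tr((X₁ − X₁ᵀ)(X₂ − X₂ᵀ) ⋯ (X_d − X_dᵀ)) is decomposable in R^{O(n)} (i.e., lies in the 𝔽-span of products g·h with g, h ∈ R^{O(n)} homogeneous of positive degree). -/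
open Matrix
noncomputable section

/-- The polynomial ring `R = 𝔽[x_{ij}(k)]` in `n² d` variables. -/
abbrev Rpoly (𝔽 : Type) [Field 𝔽] (n d : ℕ) : Type :=
  MvPolynomial (Fin n × Fin n × Fin d) 𝔽

/-- The generic matrix `X_k` with `(X_k)_{ij} = x_{ij}(k)`. -/
def Xgen (𝔽 : Type) [Field 𝔽] (n d : ℕ) (k : Fin d) :
    Matrix (Fin n) (Fin n) (Rpoly 𝔽 n d) :=
  fun i j => MvPolynomial.X (i, j, k)

/-- The symmetric generic matrix `X_k⁺`. -/
def XgenSym (𝔽 : Type) [Field 𝔽] (n d : ℕ) (k : Fin d) :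
    Matrix (Fin n) (Fin n) (Rpoly 𝔽 n d) :=
  fun i j => if j ≤ i then MvPolynomial.X (i, j, k) else MvPolynomial.X (j, i, k)

/-- The skew-symmetric generic matrix `X_k⁻`. -/
def XgenSkew (𝔽 : Type) [Field 𝔽] (n d : ℕ) (k : Fin d) :
    Matrix (Fin n) (Fin n) (Rpoly 𝔽 n d) :=
  fun i j =>
    if j < i then MvPolynomial.X (i, j, k)
    else if i < j then - MvPolynomial.X (j, i, k)
    else 0

/-- `σ_t(A)`, the `t`-th coefficient of the characteristic polynomial of `A`
(so `σ₁ = tr`, `σ_n = det`). -/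
def sigmaCoeff {𝔽 : Type} [Field 𝔽] {n d : ℕ} (t : ℕ)
    (A : Matrix (Fin n) (Fin n) (Rpoly 𝔽 n d)) : Rpoly 𝔽 n d :=
  (-1) ^ t * A.charpoly.coeff (n - t)

/-- The algebra `R^{O(n)}` of matrix `O(n)`-invariants: generated by all `σ_t(A)`,
`1 ≤ t ≤ n`, where `A` is a nonempty product of generic and transposed generic matrices. -/
def invO (𝔽 : Type) [Field 𝔽] (n d : ℕ) : Subalgebra 𝔽 (Rpoly 𝔽 n d) :=
  Algebra.adjoin 𝔽
    {f | ∃ t, 1 ≤ t ∧ t ≤ n ∧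
      ∃ w : List (Matrix (Fin n) (Fin n) (Rpoly 𝔽 n d)), w ≠ [] ∧
        (∀ m ∈ w, (∃ k, m = Xgen 𝔽 n d k) ∨ (∃ k, m = (Xgen 𝔽 n d k)ᵀ)) ∧
        f = sigmaCoeff t w.prod}

/-- The algebra `R₊^{O(n)}`, generated by all `σ_t(A)` for `A` a nonempty product of
symmetric generic matrices. -/
def invOplus (𝔽 : Type) [Field 𝔽] (n d : ℕ) : Subalgebra 𝔽 (Rpoly 𝔽 n d) :=
  Algebra.adjoin 𝔽
    {f | ∃ t, 1 ≤ t ∧ t ≤ n ∧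
      ∃ w : List (Matrix (Fin n) (Fin n) (Rpoly 𝔽 n d)), w ≠ [] ∧
        (∀ m ∈ w, ∃ k, m = XgenSym 𝔽 n d k) ∧
        f = sigmaCoeff t w.prod}

/-- The algebra `R₋^{O(n)}`, generated by all `σ_t(A)` for `A` a nonempty product of
skew-symmetric generic matrices. -/
def invOminus (𝔽 : Type) [Field 𝔽] (n d : ℕ) : Subalgebra 𝔽 (Rpoly 𝔽 n d) :=
  Algebra.adjoin 𝔽
    {f | ∃ t, 1 ≤ t ∧ t ≤ n ∧
      ∃ w : List (Matrix (Fin n) (Fin n) (Rpoly 𝔽 n d)), w ≠ [] ∧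
        (∀ m ∈ w, ∃ k, m = XgenSkew 𝔽 n d k) ∧
        f = sigmaCoeff t w.prod}

/-- `f` is decomposable in the subalgebra `A`: it lies in the `𝔽`-span of products `g·h`
with `g, h ∈ A` homogeneous of positive degree. -/
def Decomposable (𝔽 : Type) [Field 𝔽] {n d : ℕ} (A : Subalgebra 𝔽 (Rpoly 𝔽 n d))
    (f : Rpoly 𝔽 n d) : Prop :=
  f ∈ Submodule.span 𝔽
    {x : Rpoly 𝔽 n d | ∃ g ∈ A, ∃ h ∈ A,
      (∃ i, 0 < i ∧ MvPolynomial.IsHomogeneous g i) ∧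
      (∃ j, 0 < j ∧ MvPolynomial.IsHomogeneous h j) ∧ x = g * h}


open Polynomial

namespace AmitsurAux

variable {R : Type} [CommRing R] {Q : Type} [CommRing Q] {n : ℕ}

def tv (ρ : R →+* Q) (u : Q) (p : ℕ × Matrix (Fin n) (Fin n) R) :
    Matrix (Fin n) (Fin n) Q :=
  u ^ p.1 • p.2.map ρ

def sumL (ρ : R →+* Q) (u : Q) (L : List (ℕ × Matrix (Fin n) (Fin n) R)) :
    Matrix (Fin n) (Fin n) Q :=
  (L.map (tv ρ u)).sum

def Pred (S : Set (Matrix (Fin n) (Fin n) R)) (c : ℕ)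
    (L : List (ℕ × Matrix (Fin n) (Fin n) R)) : Prop :=
  ∀ p ∈ L, c ≤ p.1 ∧ p.2 ∈ S

def Bsub (ρ : R →+* Q) (u : Q) (S : Set (Matrix (Fin n) (Fin n) R)) : Subring Q :=
  Subring.closure {x | ∃ e, 1 ≤ e ∧ ∃ w ∈ S, x = Matrix.det (1 - u ^ e • w.map ρ)}

lemma sumL_nil (ρ : R →+* Q) (u : Q) : sumL (n := n) ρ u [] = 0 := rfl

lemma sumL_cons (ρ : R →+* Q) (u : Q) (p : ℕ × Matrix (Fin n) (Fin n) R)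
    (L : List (ℕ × Matrix (Fin n) (Fin n) R)) :
    sumL ρ u (p :: L) = tv ρ u p + sumL ρ u L := by
  simp [sumL]

lemma sumL_singleton (ρ : R →+* Q) (u : Q) (p : ℕ × Matrix (Fin n) (Fin n) R) :
    sumL ρ u [p] = tv ρ u p := by
  simp [sumL]

lemma sumL_append (ρ : R →+* Q) (u : Q) (L₁ L₂ : List (ℕ × Matrix (Fin n) (Fin n) R)) :
    sumL ρ u (L₁ ++ L₂) = sumL ρ u L₁ + sumL ρ u L₂ := by
  simp [sumL]

lemma tv_mul (ρ : R →+* Q) (u : Q) (p q : ℕ × Matrix (Fin n) (Fin n) R) :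
    tv ρ u p * tv ρ u q = tv ρ u (p.1 + q.1, p.2 * q.2) := by
  simp only [tv, smul_mul_smul_comm, pow_add, Matrix.map_mul]

lemma tv_mul_sumL (ρ : R →+* Q) (u : Q) (p : ℕ × Matrix (Fin n) (Fin n) R)
    (L₂ : List (ℕ × Matrix (Fin n) (Fin n) R)) :
    tv ρ u p * sumL ρ u L₂ = sumL ρ u (L₂.map fun q => (p.1 + q.1, p.2 * q.2)) := by
  induction L₂ with
  | nil => simp [sumL]
  | cons q L ih =>
    rw [sumL_cons, mul_add, ih, List.map_cons, sumL_cons, tv_mul]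

lemma predMono {S : Set (Matrix (Fin n) (Fin n) R)} {c c' : ℕ} (h : c' ≤ c) {L : List (ℕ × Matrix (Fin n) (Fin n) R)}
    (hL : Pred S c L) : Pred S c' L :=
  fun p hp => ⟨le_trans h (hL p hp).1, (hL p hp).2⟩

lemma predAppend {S : Set (Matrix (Fin n) (Fin n) R)} {c : ℕ} {L₁ L₂ : List (ℕ × Matrix (Fin n) (Fin n) R)}
    (h₁ : Pred S c L₁) (h₂ : Pred S c L₂) : Pred S c (L₁ ++ L₂) := by
  intro p hp
  rcases List.mem_append.1 hp with hp | hp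
  exacts [h₁ p hp, h₂ p hp]

lemma mulTerms {S : Set (Matrix (Fin n) (Fin n) R)}
    (hS : ∀ a ∈ S, ∀ b ∈ S, a * b ∈ S) (ρ : R →+* Q) (u : Q) {a b : ℕ}
    {L₁ L₂ : List (ℕ × Matrix (Fin n) (Fin n) R)} (h₁ : Pred S a L₁) (h₂ : Pred S b L₂) :
    ∃ L₃, Pred S (a + b) L₃ ∧ sumL ρ u L₁ * sumL ρ u L₂ = sumL ρ u L₃ := by
  induction L₁ with
  | nil => exact ⟨[], by intro p hp; simp at hp, by simp [sumL]⟩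
  | cons p L ih =>
    obtain ⟨L₃, hP, hE⟩ := ih (fun q hq => h₁ q (List.mem_cons_of_mem _ hq))
    refine ⟨(L₂.map fun q => (p.1 + q.1, p.2 * q.2)) ++ L₃, ?_, ?_⟩
    · refine predAppend ?_ hP
      intro r hr
      obtain ⟨q, hq, rfl⟩ := List.mem_map.1 hr
      have hp := h₁ p (List.mem_cons_self)
      have hq' := h₂ q hq
      exact ⟨Nat.add_le_add hp.1 hq'.1, hS _ hp.2 _ hq'.2⟩
    · rw [sumL_cons, add_mul, tv_mul_sumL, hE, sumL_append]

lemma powTerms {S : Set (Matrix (Fin n) (Fin n) R)}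
    (hS : ∀ a ∈ S, ∀ b ∈ S, a * b ∈ S) (ρ : R →+* Q) (u : Q) {c : ℕ}
    {L : List (ℕ × Matrix (Fin n) (Fin n) R)} (hL : Pred S c L) (k : ℕ) :
    ∃ L', Pred S ((k + 1) * c) L' ∧ (sumL ρ u L) ^ (k + 1) = sumL ρ u L' := by
  induction k with
  | zero => exact ⟨L, by simpa using hL, by rw [pow_one]⟩
  | succ k ih =>
    obtain ⟨L', hP, hE⟩ := ih
    obtain ⟨L'', hP', hE'⟩ := mulTerms hS ρ u hP hL
    refine ⟨L'', ?_, ?_⟩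
    · have harith : (k + 1 + 1) * c = (k + 1) * c + c := by ring
      rw [harith]
      exact hP'
    · rw [pow_succ, hE, hE']

lemma vanish' {S : Set (Matrix (Fin n) (Fin n) R)} (ρ : R →+* Q) (u : Q) {T : ℕ}
    (hu : u ^ (T + 1) = 0) {L : List (ℕ × Matrix (Fin n) (Fin n) R)}
    (hL : Pred S (T + 1) L) : sumL ρ u L = 0 := by
  induction L with
  | nil => rfl
  | cons p L ih =>
    rw [sumL_cons, ih (fun q hq => hL q (List.mem_cons_of_mem _ hq)), add_zero]
    have hp := (hL p (List.mem_cons_self)).1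
    have : u ^ p.1 = 0 := pow_eq_zero_of_le hp hu
    rw [tv, this, zero_smul]

lemma geomTerms {S : Set (Matrix (Fin n) (Fin n) R)}
    (hS : ∀ a ∈ S, ∀ b ∈ S, a * b ∈ S) (ρ : R →+* Q) (u : Q) {c : ℕ} (hc : 1 ≤ c)
    {L : List (ℕ × Matrix (Fin n) (Fin n) R)} (hL : Pred S c L) (m : ℕ) :
    ∃ Lg, Pred S c Lg ∧ (∑ k ∈ Finset.range m, (sumL ρ u L) ^ (k + 1)) = sumL ρ u Lg := by
  induction m with
  | zero => exact ⟨[], by intro p hp; simp at hp, by simp [sumL]⟩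
  | succ m ih =>
    obtain ⟨Lg, hP, hE⟩ := ih
    obtain ⟨L', hP', hE'⟩ := powTerms hS ρ u hL m
    refine ⟨Lg ++ L', predAppend hP (predMono ?_ hP'), ?_⟩
    · exact le_trans (Nat.le_mul_of_pos_left c (Nat.succ_pos m)) (le_refl _)
    · rw [Finset.sum_range_succ, hE, hE', sumL_append]

lemma factor (T : ℕ) (A B : Matrix (Fin n) (Fin n) Q) (hA : A ^ (T + 1) = 0) :
    1 - (A + B) = (1 - A) * (1 - (∑ k ∈ Finset.range (T + 1), A ^ k) * B) := by
  have h1 : (1 - A) * (∑ k ∈ Finset.range (T + 1), A ^ k) = 1 := by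
    have h := mul_geom_sum A (T + 1)
    have h2 : (1 - A) * (∑ k ∈ Finset.range (T + 1), A ^ k)
        = -((A - 1) * ∑ k ∈ Finset.range (T + 1), A ^ k) := by
      rw [← neg_sub, neg_mul]
    rw [h2, h, hA, zero_sub, neg_neg]
  rw [mul_sub, mul_one, ← mul_assoc, h1, one_mul, sub_add_eq_sub_sub]

lemma mainLemma {S : Set (Matrix (Fin n) (Fin n) R)}
    (hS : ∀ a ∈ S, ∀ b ∈ S, a * b ∈ S) (ρ : R →+* Q) (u : Q) (T : ℕ)
    (hu : u ^ (T + 1) = 0) :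
    ∀ (k c : ℕ), 1 ≤ c → T + 1 ≤ c + k → ∀ L, Pred S c L →
      (1 - sumL ρ u L).det ∈ Bsub ρ u S := by
  intro k
  induction k with
  | zero =>
    intro c hc hck L hL
    rw [vanish' ρ u hu (predMono (by omega) hL)]
    simpa using one_mem _
  | succ k ih =>
    intro c hc hck L
    induction L with
    | nil => intro _; simpa [sumL] using one_mem _
    | cons p L' ihL =>
      intro hL
      have hp := hL p (List.mem_cons_self)
      have hL' : Pred S c L' := fun q hq => hL q (List.mem_cons_of_mem _ hq)
      have hNP : Pred S c [p] := by
        intro q hq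
        rw [List.mem_singleton] at hq
        subst hq; exact hp
      obtain ⟨Lpow, hLpowP, hLpowE⟩ := powTerms hS ρ u hL' T
      have hM : (sumL ρ u L') ^ (T + 1) = 0 := by
        rw [hLpowE]
        refine vanish' ρ u hu (predMono (Nat.le_mul_of_pos_right _ hc) hLpowP)
      obtain ⟨Npow, hNpowP, hNpowE⟩ := powTerms hS ρ u hNP T
      have hN : (tv ρ u p) ^ (T + 1) = 0 := by
        rw [← sumL_singleton ρ u p, hNpowE]
        refine vanish' ρ u hu (predMono ?_ hNpowP)
        exact Nat.le_mul_of_pos_right _ hc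
      rw [sumL_cons, add_comm, factor T _ _ hM, Matrix.det_mul]
      refine mul_mem (ihL hL') ?_
      have hsplit : (∑ k ∈ Finset.range (T + 1), (sumL ρ u L') ^ k) * tv ρ u p
          = tv ρ u p + (∑ k ∈ Finset.range T, (sumL ρ u L') ^ (k + 1)) * tv ρ u p := by
        rw [Finset.sum_range_succ' _ T, add_mul, pow_zero, one_mul, add_comm]
      obtain ⟨Lg, hLgP, hLgE⟩ := geomTerms hS ρ u hc hL' T
      obtain ⟨LQ, hLQP, hLQE⟩ := mulTerms hS ρ u hLgP hNP
      have hQ : (∑ k ∈ Finset.range T, (sumL ρ u L') ^ (k + 1)) * tv ρ u p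
          = sumL ρ u LQ := by
        rw [hLgE, ← sumL_singleton ρ u p, hLQE]
      rw [hsplit, hQ, factor T _ _ hN, Matrix.det_mul]
      refine mul_mem (Subring.subset_closure ⟨p.1, le_trans hc hp.1, p.2, hp.2, rfl⟩) ?_
      have hLQP' : Pred S (c + 1) LQ := predMono (by omega) hLQP
      obtain ⟨Lh, hLhP, hLhE⟩ := geomTerms hS ρ u hc hNP T
      obtain ⟨LQ2, hLQ2P, hLQ2E⟩ := mulTerms hS ρ u hLhP hLQP'
      have hfinal : (∑ k ∈ Finset.range (T + 1), (tv ρ u p) ^ k) * sumL ρ u LQ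
          = sumL ρ u (LQ ++ LQ2) := by
        rw [Finset.sum_range_succ' _ T, add_mul, pow_zero, one_mul, sumL_append,
          ← sumL_singleton ρ u p, hLhE, hLQ2E, add_comm]
      rw [hfinal]
      exact ih (c + 1) (by omega) (by omega) _
        (predAppend hLQP' (predMono (by omega) hLQ2P))

/-- Subring of polynomials all of whose coefficients lie in a subring. -/
def coeffsIn (R : Type) [CommRing R] (Cs : Subring R) : Subring R[X] where
  carrier := {f | ∀ i, f.coeff i ∈ Cs}
  zero_mem' := by
    intro i
    rw [Polynomial.coeff_zero]
    exact zero_mem _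
  one_mem' := by
    intro i
    rw [Polynomial.coeff_one]
    split
    exacts [one_mem _, zero_mem _]
  add_mem' := by
    intro f g hf hg i
    rw [Polynomial.coeff_add]
    exact add_mem (hf i) (hg i)
  neg_mem' := by
    intro f hf i
    rw [Polynomial.coeff_neg]
    exact neg_mem (hf i)
  mul_mem' := by
    intro f g hf hg i
    rw [Polynomial.coeff_mul]
    exact sum_mem (fun x _ => mul_mem (hf _) (hg _))

lemma aeval_mem_coeffsIn {R : Type} [CommRing R] {Cs : Subring R} {f g : R[X]}
    (hf : ∀ i, f.coeff i ∈ Cs) (hg : g ∈ coeffsIn R Cs) (i : ℕ) :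
    ((Polynomial.aeval g) f).coeff i ∈ Cs := by
  rw [Polynomial.aeval_eq_sum_range]
  rw [Polynomial.finset_sum_coeff]
  refine sum_mem (fun k _ => ?_)
  rw [Polynomial.coeff_smul, smul_eq_mul]
  exact mul_mem (hf k) (pow_mem hg k i)

/-- mapping `det (1 - g • w.map C)` via a ring hom on polynomial entries -/
lemma det_one_sub_smul_map {R A : Type} [CommRing R] [CommRing A] {n : ℕ}
    (ψ : R[X] →+* A) (g : R[X]) (w : Matrix (Fin n) (Fin n) R) :
    ψ (Matrix.det (1 - g • w.map Polynomial.C))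
      = Matrix.det (1 - ψ g • w.map (ψ.comp (Polynomial.C : R →+* R[X]))) := by
  rw [RingHom.map_det]
  congr 1
  ext i j
  simp only [RingHom.mapMatrix_apply, Matrix.map_apply, Matrix.sub_apply, Matrix.smul_apply,
    Matrix.one_apply, smul_eq_mul, map_sub, _root_.map_mul, apply_ite ψ, _root_.map_one,
    _root_.map_zero, RingHom.comp_apply]

lemma sumL_ones {R Q : Type} [CommRing R] [CommRing Q] {n : ℕ}
    (ρ : R →+* Q) (u : Q) (L : List (Matrix (Fin n) (Fin n) R)) :
    sumL ρ u (L.map fun m => (1, m)) = u • (L.sum).map ρ := by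
  induction L with
  | nil => simp [sumL, Matrix.map_zero ρ (map_zero ρ)]
  | cons m L ih =>
    rw [List.map_cons, sumL_cons, ih, List.sum_cons,
      Matrix.map_add ρ (fun a b => map_add ρ a b), smul_add, tv, pow_one]

lemma amitsur_coeff {R : Type} [CommRing R] {n : ℕ}
    (S : Set (Matrix (Fin n) (Fin n) R))
    (hS : ∀ a ∈ S, ∀ b ∈ S, a * b ∈ S) (Cs : Subring R)
    (hC : ∀ w ∈ S, ∀ j, (Matrix.charpolyRev w).coeff j ∈ Cs)
    (L : List (Matrix (Fin n) (Fin n) R)) (hL : ∀ m ∈ L, m ∈ S) (j : ℕ) :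
    (Matrix.charpolyRev L.sum).coeff j ∈ Cs := by
  classical
  set T := j with hT
  set I : Ideal R[X] := Ideal.span {(X : R[X]) ^ (T + 1)} with hI
  let π : R[X] →+* R[X] ⧸ I := Ideal.Quotient.mk I
  let ρ : R →+* R[X] ⧸ I := π.comp (Polynomial.C : R →+* R[X])
  set u : R[X] ⧸ I := π X with hu'
  have hu : u ^ (T + 1) = 0 := by
    rw [hu', ← map_pow]
    exact Ideal.Quotient.eq_zero_iff_mem.2 (Ideal.subset_span rfl)
  -- mapping the det expressions into the quotient
  have hmapdet : ∀ (e : ℕ) (w : Matrix (Fin n) (Fin n) R),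
      π (Matrix.det (1 - (X : R[X]) ^ e • w.map Polynomial.C))
        = Matrix.det (1 - u ^ e • w.map ρ) := by
    intro e w
    have := det_one_sub_smul_map (n := n) π ((X : R[X]) ^ e) w
    rw [this, map_pow]
  -- the generating set in `R[X]`
  set G₀ : Set R[X] :=
    {x | ∃ e, 1 ≤ e ∧ ∃ w ∈ S, x = Matrix.det (1 - (X : R[X]) ^ e • w.map Polynomial.C)}
    with hG₀
  -- Bsub is contained in the image of the closure of G₀
  have hBsub : Bsub ρ u S ≤ (Subring.closure G₀).map π := by
    rw [Bsub]
    refine Subring.closure_le.2 ?_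
    rintro x ⟨e, he, w, hw, rfl⟩
    exact ⟨Matrix.det (1 - (X : R[X]) ^ e • w.map Polynomial.C),
      Subring.subset_closure ⟨e, he, w, hw, rfl⟩, hmapdet e w⟩
  -- the main membership
  have hlist : Pred S 1 (L.map fun m => (1, m)) := by
    intro p hp
    obtain ⟨m, hm, rfl⟩ := List.mem_map.1 hp
    exact ⟨le_refl 1, hL m hm⟩
  have hmain := mainLemma hS ρ u T hu T 1 (le_refl 1) (by omega) _ hlist
  -- identify the matrix
  have hsum : sumL ρ u (L.map fun m => (1, m)) = u • (L.sum).map ρ := sumL_ones ρ u L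
  have hπd : π (Matrix.charpolyRev L.sum) = det (1 - sumL ρ u (L.map fun m => (1, m))) := by
    rw [hsum, Matrix.charpolyRev]
    have h1 := hmapdet 1 L.sum
    simp only [pow_one] at h1
    exact h1
  -- extract b
  obtain ⟨b, hb, hπb⟩ := hBsub hmain
  rw [← hπd] at hπb
  have hdiff : Matrix.charpolyRev L.sum - b ∈ I :=
    (Ideal.Quotient.mk_eq_mk_iff_sub_mem _ _).1 hπb.symm
  obtain ⟨q, hq⟩ := Ideal.mem_span_singleton.1 hdiff
  have hco : (Matrix.charpolyRev L.sum).coeff j = b.coeff j := by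
    have : Matrix.charpolyRev L.sum = b + X ^ (T + 1) * q := by
      rw [← hq]; ring
    rw [this, Polynomial.coeff_add, mul_comm, Polynomial.coeff_mul_X_pow' q (T + 1) j]
    rw [if_neg (by omega), add_zero]
  rw [hco]
  -- all coefficients of b lie in Cs
  have hclos : Subring.closure G₀ ≤ coeffsIn R Cs := by
    refine Subring.closure_le.2 ?_
    rintro x ⟨e, he, w, hw, rfl⟩
    have hdet : Matrix.det (1 - (X : R[X]) ^ e • w.map Polynomial.C)
        = (Polynomial.aeval ((X : R[X]) ^ e)) (Matrix.charpolyRev w) := by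
      have h2 := det_one_sub_smul_map (n := n)
        ((Polynomial.aeval ((X : R[X]) ^ e)).toRingHom) (X : R[X]) w
      have hw' : w.map ((Polynomial.aeval ((X : R[X]) ^ e)).toRingHom.comp
          (Polynomial.C : R →+* R[X])) = w.map Polynomial.C := by
        ext i j
        simp [Matrix.map_apply]
      have hX : (Polynomial.aeval ((X : R[X]) ^ e)).toRingHom (X : R[X]) = (X : R[X]) ^ e := by
        simp
      rw [hw', hX] at h2
      rw [Matrix.charpolyRev]
      exact h2.symm
    intro i
    rw [hdet]
    refine aeval_mem_coeffsIn (hC w hw) ?_ i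
    refine pow_mem ?_ e
    intro i
    rw [Polynomial.coeff_X]
    split
    exacts [one_mem _, zero_mem _]
  exact hclos hb j

end AmitsurAux

namespace DecompAux
open AmitsurAux Polynomial

variable (𝔽 : Type) [Field 𝔽] (n d : ℕ)

/-- The substitution `x_{ij}(k) ↦ x_{ij}(k) - x_{ji}(k)`. -/
def phi : Rpoly 𝔽 n d →ₐ[𝔽] Rpoly 𝔽 n d :=
  MvPolynomial.aeval (fun q => MvPolynomial.X q - MvPolynomial.X (q.2.1, q.1, q.2.2))

lemma phi_X (i j : Fin n) (k : Fin d) :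
    phi 𝔽 n d (MvPolynomial.X (i, j, k))
      = MvPolynomial.X (i, j, k) - MvPolynomial.X (j, i, k) := by
  simp [phi]

def Ymat (k : Fin d) : Matrix (Fin n) (Fin n) (Rpoly 𝔽 n d) :=
  Xgen 𝔽 n d k - (Xgen 𝔽 n d k)ᵀ

lemma map_skew (k : Fin d) :
    (XgenSkew 𝔽 n d k).map (phi 𝔽 n d) = Ymat 𝔽 n d k := by
  ext i j
  simp only [Matrix.map_apply, XgenSkew, Ymat, Matrix.sub_apply, Matrix.transpose_apply, Xgen]
  rcases lt_trichotomy i j with h | h | h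
  · rw [if_neg (by omega), if_pos h, map_neg, phi_X]
    ring
  · subst h
    rw [if_neg (lt_irrefl _), if_neg (lt_irrefl _), map_zero, sub_self]
  · rw [if_pos h, phi_X]

lemma trace_map' {A B : Type} [CommRing A] [CommRing B] {m : ℕ} (f : A →+* B)
    (M : Matrix (Fin m) (Fin m) A) : f (Matrix.trace M) = Matrix.trace (M.map f) := by
  simp [Matrix.trace, Matrix.diag, map_sum, Matrix.map_apply]

lemma prod_map' {A B : Type} [CommRing A] [CommRing B] {m : ℕ} (f : A →+* B)
    (L : List (Matrix (Fin m) (Fin m) A)) :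
    (L.prod).map f = (L.map fun M => M.map f).prod := by
  have h := map_list_prod (f.mapMatrix : Matrix (Fin m) (Fin m) A →+* Matrix (Fin m) (Fin m) B) L
  exact h

lemma phi_sigma (t : ℕ) (M : Matrix (Fin n) (Fin n) (Rpoly 𝔽 n d)) :
    phi 𝔽 n d (sigmaCoeff t M) = sigmaCoeff t (M.map (phi 𝔽 n d)) := by
  unfold sigmaCoeff
  rw [_root_.map_mul, map_pow, _root_.map_neg, _root_.map_one]
  congr 1
  have h := Matrix.charpoly_map M (phi 𝔽 n d).toRingHom
  simp only [AlgHom.toRingHom_eq_coe, RingHom.coe_coe] at h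
  rw [h, Polynomial.coeff_map]
  rfl

/-- Signed words in the generic matrices and their transposes. -/
def Sset : Set (Matrix (Fin n) (Fin n) (Rpoly 𝔽 n d)) :=
  {M | ∃ w : List (Matrix (Fin n) (Fin n) (Rpoly 𝔽 n d)), w ≠ [] ∧
    (∀ m ∈ w, (∃ k, m = Xgen 𝔽 n d k) ∨ (∃ k, m = (Xgen 𝔽 n d k)ᵀ)) ∧
    (M = w.prod ∨ M = -w.prod)}

lemma Sset_mul : ∀ a ∈ Sset 𝔽 n d, ∀ b ∈ Sset 𝔽 n d, a * b ∈ Sset 𝔽 n d := by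
  rintro a ⟨w₁, h₁, hw₁, hs₁⟩ b ⟨w₂, h₂, hw₂, hs₂⟩
  refine ⟨w₁ ++ w₂, by simp [h₁], ?_, ?_⟩
  · intro m hm
    rcases List.mem_append.1 hm with hm | hm
    exacts [hw₁ m hm, hw₂ m hm]
  · rw [List.prod_append]
    rcases hs₁ with rfl | rfl <;> rcases hs₂ with rfl | rfl
    · exact Or.inl rfl
    · exact Or.inr (by rw [mul_neg])
    · exact Or.inr (by rw [neg_mul])
    · exact Or.inl (by rw [neg_mul, mul_neg, neg_neg])

/-- all coefficients of `charpolyRev` of a word lie in `invO`. -/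
lemma charpolyRev_word_mem (hn : 2 ≤ n)
    (w : List (Matrix (Fin n) (Fin n) (Rpoly 𝔽 n d))) (hne : w ≠ [])
    (hw : ∀ m ∈ w, (∃ k, m = Xgen 𝔽 n d k) ∨ (∃ k, m = (Xgen 𝔽 n d k)ᵀ)) (j : ℕ) :
    (Matrix.charpolyRev w.prod).coeff j ∈ (invO 𝔽 n d).toSubring := by
  rw [← Matrix.reverse_charpoly, Polynomial.coeff_reverse]
  have hdeg : (Matrix.charpoly w.prod).natDegree = n := by
    rw [Matrix.charpoly_natDegree_eq_dim, Fintype.card_fin]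
  rw [hdeg]
  rcases le_or_gt j n with hj | hj
  · rw [Polynomial.revAt_le hj]
    rcases Nat.eq_zero_or_pos j with rfl | hj1
    · have hmon := (Matrix.charpoly_monic w.prod).coeff_natDegree
      rw [hdeg] at hmon
      rw [Nat.sub_zero, hmon]
      exact one_mem _
    · have hs : sigmaCoeff j w.prod ∈ invO 𝔽 n d :=
        Algebra.subset_adjoin ⟨j, hj1, hj, w, hne, hw, rfl⟩
      have : (Matrix.charpoly w.prod).coeff (n - j)
          = (-1) ^ j * sigmaCoeff j w.prod := by
        unfold sigmaCoeff
        rw [← mul_assoc, ← mul_pow]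
        simp
      rw [this]
      exact mul_mem (pow_mem (neg_mem (one_mem _)) j) hs
  · have hrev : (Polynomial.revAt n) j = j := by
      exact Polynomial.revAt_eq_self_of_lt hj
    rw [hrev, Polynomial.coeff_eq_zero_of_natDegree_lt (by omega)]
    exact zero_mem _

lemma charpolyRev_neg {R : Type} [CommRing R] {m : ℕ} (A : Matrix (Fin m) (Fin m) R) :
    Matrix.charpolyRev (-A) = (Polynomial.aeval (-(X : R[X]))) (Matrix.charpolyRev A) := by
  have h2 := AmitsurAux.det_one_sub_smul_map (n := m)
    ((Polynomial.aeval (-(X : R[X]))).toRingHom) (X : R[X]) A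
  have hw' : A.map ((Polynomial.aeval (-(X : R[X]))).toRingHom.comp
      (Polynomial.C : R →+* R[X])) = A.map Polynomial.C := by
    ext i j
    simp [Matrix.map_apply]
  have hX : (Polynomial.aeval (-(X : R[X]))).toRingHom (X : R[X]) = -(X : R[X]) := by simp
  rw [hw', hX] at h2
  have hAneg : (1 : Matrix (Fin m) (Fin m) R[X]) - (X : R[X]) • (-A).map Polynomial.C
      = 1 - (-(X : R[X])) • A.map Polynomial.C := by
    ext i j : 2
    simp only [Matrix.sub_apply, Matrix.smul_apply, Matrix.map_apply, Matrix.neg_apply,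
      map_neg, smul_eq_mul]
    ring
  rw [Matrix.charpolyRev, Matrix.charpolyRev, hAneg, ← h2]
  rfl

lemma hC_Sset (hn : 2 ≤ n) :
    ∀ w ∈ Sset 𝔽 n d, ∀ j,
      (Matrix.charpolyRev w).coeff j ∈ (invO 𝔽 n d).toSubring := by
  rintro w ⟨v, hne, hv, hs⟩ j
  have hword := charpolyRev_word_mem 𝔽 n d hn v hne hv
  rcases hs with rfl | rfl
  · exact hword j
  · rw [charpolyRev_neg]
    refine AmitsurAux.aeval_mem_coeffsIn hword ?_ j
    intro i
    rw [Polynomial.coeff_neg, Polynomial.coeff_X]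
    split
    exacts [neg_mem (one_mem _), neg_mem (zero_mem _)]

lemma mul_list_sum {α : Type} [Ring α] (a : α) (L : List α) :
    a * L.sum = (L.map (a * ·)).sum := by
  induction L with
  | nil => simp
  | cons b L ih => rw [List.sum_cons, mul_add, List.map_cons, List.sum_cons, ih]

lemma mul_sum_list {α : Type} [Ring α] {S : Set α} (hS : ∀ a ∈ S, ∀ b ∈ S, a * b ∈ S)
    (L₁ L₂ : List α) (h₁ : ∀ x ∈ L₁, x ∈ S) (h₂ : ∀ x ∈ L₂, x ∈ S) :
    ∃ L₃ : List α, (∀ x ∈ L₃, x ∈ S) ∧ L₁.sum * L₂.sum = L₃.sum := by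
  induction L₁ with
  | nil => exact ⟨[], by intro x hx; simp at hx, by simp⟩
  | cons a L ih =>
    obtain ⟨L₃, hP, hE⟩ := ih (fun x hx => h₁ x (List.mem_cons_of_mem _ hx))
    have hmul : a * L₂.sum = (L₂.map (a * ·)).sum := mul_list_sum a L₂
    refine ⟨L₂.map (a * ·) ++ L₃, ?_, ?_⟩
    · intro x hx
      rcases List.mem_append.1 hx with hx | hx
      · obtain ⟨b, hb, rfl⟩ := List.mem_map.1 hx
        exact hS a (h₁ a (List.mem_cons_self)) b (h₂ b hb)
      · exact hP x hx
    · rw [List.sum_cons, add_mul, hmul, hE, List.sum_append]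

lemma Xgen_mem_Sset (k : Fin d) : Xgen 𝔽 n d k ∈ Sset 𝔽 n d := by
  refine ⟨[Xgen 𝔽 n d k], by simp, ?_, Or.inl (by simp)⟩
  intro m hm
  rw [List.mem_singleton] at hm
  subst hm
  exact Or.inl ⟨k, rfl⟩

lemma negXgenT_mem_Sset (k : Fin d) : -(Xgen 𝔽 n d k)ᵀ ∈ Sset 𝔽 n d := by
  refine ⟨[(Xgen 𝔽 n d k)ᵀ], by simp, ?_, Or.inr (by simp)⟩
  intro m hm
  rw [List.mem_singleton] at hm
  subst hm
  exact Or.inr ⟨k, rfl⟩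

lemma Y_mem_sum (k : Fin d) :
    ∃ L : List (Matrix (Fin n) (Fin n) (Rpoly 𝔽 n d)),
      (∀ x ∈ L, x ∈ Sset 𝔽 n d) ∧ Ymat 𝔽 n d k = L.sum := by
  refine ⟨[Xgen 𝔽 n d k, -(Xgen 𝔽 n d k)ᵀ], ?_, ?_⟩
  · intro x hx
    rcases List.mem_cons.1 hx with rfl | hx
    · exact Xgen_mem_Sset 𝔽 n d k
    · rw [List.mem_singleton] at hx
      subst hx
      exact negXgenT_mem_Sset 𝔽 n d k
  · rw [List.sum_cons, List.sum_cons, List.sum_nil, add_zero, Ymat, sub_eq_add_neg]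

lemma word_sum (w : List (Matrix (Fin n) (Fin n) (Rpoly 𝔽 n d))) (hne : w ≠ [])
    (hw : ∀ m ∈ w, ∃ k, m = Ymat 𝔽 n d k) :
    ∃ L : List (Matrix (Fin n) (Fin n) (Rpoly 𝔽 n d)),
      (∀ x ∈ L, x ∈ Sset 𝔽 n d) ∧ w.prod = L.sum := by
  induction w with
  | nil => exact absurd rfl hne
  | cons a w ih =>
    obtain ⟨k, rfl⟩ := hw a (List.mem_cons_self)
    obtain ⟨La, hLa, hEa⟩ := Y_mem_sum 𝔽 n d k
    rcases eq_or_ne w [] with rfl | hw'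
    · refine ⟨La, hLa, ?_⟩
      rw [List.prod_cons, List.prod_nil, mul_one, hEa]
    · obtain ⟨L₂, hL₂, hE₂⟩ := ih hw' (fun m hm => hw m (List.mem_cons_of_mem _ hm))
      obtain ⟨L₃, hL₃, hE₃⟩ := mul_sum_list (Sset_mul 𝔽 n d) La L₂ hLa hL₂
      refine ⟨L₃, hL₃, ?_⟩
      rw [List.prod_cons, hEa, hE₂, hE₃]

lemma sigma_Y_mem (hn : 2 ≤ n) (t : ℕ) (ht1 : 1 ≤ t) (htn : t ≤ n)
    (w : List (Matrix (Fin n) (Fin n) (Rpoly 𝔽 n d))) (hne : w ≠ [])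
    (hw : ∀ m ∈ w, ∃ k, m = Ymat 𝔽 n d k) :
    sigmaCoeff t w.prod ∈ invO 𝔽 n d := by
  obtain ⟨L, hLS, hLsum⟩ := word_sum 𝔽 n d w hne hw
  have hco := AmitsurAux.amitsur_coeff (Sset 𝔽 n d) (Sset_mul 𝔽 n d)
    (invO 𝔽 n d).toSubring (hC_Sset 𝔽 n d hn) L hLS t
  rw [← hLsum] at hco
  have hkey : sigmaCoeff t w.prod = (-1) ^ t * (Matrix.charpolyRev w.prod).coeff t := by
    rw [← Matrix.reverse_charpoly, Polynomial.coeff_reverse]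
    have hdeg : (Matrix.charpoly w.prod).natDegree = n := by
      rw [Matrix.charpoly_natDegree_eq_dim, Fintype.card_fin]
    rw [hdeg, Polynomial.revAt_le htn]
    rfl
  rw [hkey]
  exact mul_mem (pow_mem (neg_mem (one_mem _)) t) hco

lemma phi_invOminus (hn : 2 ≤ n) {g : Rpoly 𝔽 n d} (hg : g ∈ invOminus 𝔽 n d) :
    phi 𝔽 n d g ∈ invO 𝔽 n d := by
  have hle : Subalgebra.map (phi 𝔽 n d) (invOminus 𝔽 n d) ≤ invO 𝔽 n d := by
    unfold invOminus
    rw [AlgHom.map_adjoin, Algebra.adjoin_le_iff]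
    rintro x ⟨y, ⟨t, ht1, htn, w, hne, hw, rfl⟩, rfl⟩
    rw [phi_sigma]
    have hprod := prod_map' (phi 𝔽 n d).toRingHom w
    simp only [AlgHom.toRingHom_eq_coe, RingHom.coe_coe] at hprod
    rw [hprod]
    refine sigma_Y_mem 𝔽 n d hn t ht1 htn _ (by simpa using hne) ?_
    intro m hm
    obtain ⟨M, hM, rfl⟩ := List.mem_map.1 hm
    obtain ⟨k, rfl⟩ := hw M hM
    exact ⟨k, map_skew 𝔽 n d k⟩
  refine hle ?_
  rw [Subalgebra.mem_map]
  exact ⟨g, hg, rfl⟩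

lemma phi_homog {g : Rpoly 𝔽 n d} {i : ℕ} (hg : g.IsHomogeneous i) :
    (phi 𝔽 n d g).IsHomogeneous i := by
  have h := MvPolynomial.IsHomogeneous.aeval (S := 𝔽) (n := 1) hg
    (fun q => (MvPolynomial.X q : Rpoly 𝔽 n d) - MvPolynomial.X (q.2.1, q.1, q.2.2))
    (fun q => (MvPolynomial.isHomogeneous_X _ _).sub (MvPolynomial.isHomogeneous_X _ _))
  rw [one_mul] at h
  exact h

end DecompAux

theorem decomposable_skew_imp_decomposable_diff
    (𝔽 : Type) [Field 𝔽] [Infinite 𝔽] (n d : ℕ) (hn : 2 ≤ n) (hd : 1 ≤ d)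
    (hp2 : ringChar 𝔽 ≠ 2)
    (hdec : Decomposable 𝔽 (invOminus 𝔽 n d)
      (Matrix.trace (List.ofFn (fun k : Fin d => XgenSkew 𝔽 n d k)).prod)) :
    Decomposable 𝔽 (invO 𝔽 n d)
      (Matrix.trace (List.ofFn (fun k : Fin d =>
        Xgen 𝔽 n d k - (Xgen 𝔽 n d k)ᵀ)).prod) := by
  classical
  have hphiT : DecompAux.phi 𝔽 n d
      (Matrix.trace (List.ofFn (fun k : Fin d => XgenSkew 𝔽 n d k)).prod)
      = Matrix.trace (List.ofFn (fun k : Fin d =>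
          Xgen 𝔽 n d k - (Xgen 𝔽 n d k)ᵀ)).prod := by
    have h1 := DecompAux.trace_map' (DecompAux.phi 𝔽 n d).toRingHom
      (List.ofFn fun k : Fin d => XgenSkew 𝔽 n d k).prod
    have h2 := DecompAux.prod_map' (DecompAux.phi 𝔽 n d).toRingHom
      (List.ofFn fun k : Fin d => XgenSkew 𝔽 n d k)
    simp only [AlgHom.toRingHom_eq_coe, RingHom.coe_coe] at h1 h2
    rw [h1, h2, List.map_ofFn]
    have h3 : ((fun M => M.map ⇑(DecompAux.phi 𝔽 n d)) ∘ fun k : Fin d => XgenSkew 𝔽 n d k)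
        = fun k : Fin d => Xgen 𝔽 n d k - (Xgen 𝔽 n d k)ᵀ := by
      funext k
      rw [Function.comp_apply]
      exact DecompAux.map_skew 𝔽 n d k
    rw [h3]
  rw [← hphiT]
  unfold Decomposable at hdec ⊢

  have hmem : DecompAux.phi 𝔽 n d
      (Matrix.trace (List.ofFn (fun k : Fin d => XgenSkew 𝔽 n d k)).prod)
      ∈ Submodule.map (DecompAux.phi 𝔽 n d).toLinearMap
        (Submodule.span 𝔽
          {x : Rpoly 𝔽 n d | ∃ g ∈ invOminus 𝔽 n d, ∃ h ∈ invOminus 𝔽 n d,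
            (∃ i, 0 < i ∧ MvPolynomial.IsHomogeneous g i) ∧
            (∃ j, 0 < j ∧ MvPolynomial.IsHomogeneous h j) ∧ x = g * h}) :=
    ⟨_, hdec, rfl⟩
  rw [Submodule.map_span] at hmem
  refine Submodule.span_le.2 ?_ hmem
  rintro _ ⟨x, ⟨g, hg, h, hh, ⟨i, hi, hgi⟩, ⟨j, hj, hhj⟩, rfl⟩, rfl⟩
  rw [AlgHom.toLinearMap_apply]
  refine Submodule.subset_span ?_
  refine ⟨DecompAux.phi 𝔽 n d g, DecompAux.phi_invOminus 𝔽 n d hn hg,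
    DecompAux.phi 𝔽 n d h, DecompAux.phi_invOminus 𝔽 n d hn hh,
    ⟨i, hi, DecompAux.phi_homog 𝔽 n d hgi⟩,
    ⟨j, hj, DecompAux.phi_homog 𝔽 n d hhj⟩, ?_⟩
  exact _root_.map_mul _ _ _

end
end

section
/- Let 𝔽 be an infinite field of characteristic p with 0 < p ≤ n/2 and p ≠ 2, and let d ≥ 1 be even. Then the invariant tr((X₁ − X₁ᵀ)(X₂ − X₂ᵀ) ⋯ (X_d − X_dᵀ)) is indecomposable in R^{O(n)}; that is, it does not lie in the 𝔽-span of products g·h with g, h ∈ R^{O(n)} homogeneous of positive degree. -/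
open Matrix
noncomputable section

set_option linter.unusedSectionVars false
set_option linter.unusedTactic false
set_option maxHeartbeats 1000000

open Matrix Polynomial

noncomputable section

lemma coeff_comp_CcX {R : Type*} [CommRing R] (c : R) (q : R[X]) (j : ℕ) :
    (Polynomial.eval₂ (Polynomial.C : R →+* R[X]) (Polynomial.C c * Polynomial.X) q).coeff j
      = c ^ j * q.coeff j := by
  rw [Polynomial.eval₂_eq_sum_range]
  rw [Polynomial.finset_sum_coeff]
  have : ∀ i ∈ Finset.range (q.natDegree + 1),
      (Polynomial.C (q.coeff i) * (Polynomial.C c * Polynomial.X) ^ i).coeff j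
        = if i = j then c ^ j * q.coeff j else 0 := by
    intro i _
    rw [mul_pow, ← Polynomial.C_pow, ← mul_assoc, ← Polynomial.C_mul, Polynomial.coeff_C_mul,
      Polynomial.coeff_X_pow]
    by_cases h : i = j
    · simp [h, mul_comm]
    · simp [h, Ne.symm h]
  rw [Finset.sum_congr rfl this, Finset.sum_ite_eq' (Finset.range (q.natDegree + 1)) j]
  by_cases hj : j ∈ Finset.range (q.natDegree + 1)
  · simp [hj]
  · simp only [hj, if_false]
    rw [Polynomial.coeff_eq_zero_of_natDegree_lt, mul_zero]
    simpa using Nat.lt_of_succ_le (not_lt.mp (by simpa [Finset.mem_range] using hj))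

lemma charpoly_smul_coeff {R : Type*} [CommRing R] [IsDomain R] {N : ℕ}
    (c : R) (hc : c ≠ 0) (M : Matrix (Fin N) (Fin N) R) (j : ℕ) (hj : j ≤ N) :
    (c • M).charpoly.coeff j = c ^ (N - j) * M.charpoly.coeff j := by
  have key : Polynomial.eval₂ (Polynomial.C : R →+* R[X]) (Polynomial.C c * Polynomial.X)
      (c • M).charpoly = Polynomial.C c ^ N * M.charpoly := by
    have hmap : (charmatrix (c • M)).map (Polynomial.eval₂RingHom (Polynomial.C : R →+* R[X])
        (Polynomial.C c * Polynomial.X)) = Polynomial.C c • charmatrix M := by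
      ext i k
      by_cases h : i = k
      · subst h
        simp [charmatrix_apply_eq, Polynomial.eval₂_sub, Polynomial.eval₂_C, Matrix.smul_apply,
          Polynomial.C_mul, mul_sub]
      · simp [charmatrix_apply_ne _ _ _ h, Matrix.smul_apply, Polynomial.C_mul]
    have hdet := (Polynomial.eval₂RingHom (Polynomial.C : R →+* R[X])
        (Polynomial.C c * Polynomial.X)).map_det (charmatrix (c • M))
    rw [RingHom.mapMatrix_apply] at hdet
    rw [Matrix.charpoly]
    rw [show ∀ x : R[X], Polynomial.eval₂ (Polynomial.C : R →+* R[X])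
      (Polynomial.C c * Polynomial.X) x = Polynomial.eval₂RingHom (Polynomial.C : R →+* R[X])
      (Polynomial.C c * Polynomial.X) x from fun _ => rfl]
    rw [hdet, hmap, Matrix.det_smul, Matrix.charpoly]
    rw [Fintype.card_fin]
  have h1 : ∀ j, c ^ j * ((c • M).charpoly.coeff j) = c ^ N * M.charpoly.coeff j := by
    intro j
    have hk := congrArg (fun q => q.coeff j) key
    rw [coeff_comp_CcX, ← Polynomial.C_pow, Polynomial.coeff_C_mul] at hk
    exact hk
  have h2 := h1 j
  have : c ^ j * ((c • M).charpoly.coeff j) = c ^ j * (c ^ (N - j) * M.charpoly.coeff j) := by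
    rw [h2, ← mul_assoc, ← pow_add]
    congr 2
    omega
  exact mul_left_cancel₀ (pow_ne_zero _ hc) this

end
open Matrix

noncomputable section

section BC
variable {𝔽 : Type} [Field 𝔽] {p : ℕ} [NeZero p]

/-- block-circulant matrix -/
def bcirc (g : ZMod p → Matrix (Fin 2) (Fin 2) 𝔽) :
    Matrix (ZMod p × Fin 2) (ZMod p × Fin 2) 𝔽 :=
  fun u v => g (v.1 - u.1) u.2 v.2

def gconv (g h : ZMod p → Matrix (Fin 2) (Fin 2) 𝔽) : ZMod p → Matrix (Fin 2) (Fin 2) 𝔽 :=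
  fun b => ∑ a : ZMod p, g a * h (b - a)

lemma bcirc_mul (g h : ZMod p → Matrix (Fin 2) (Fin 2) 𝔽) :
    bcirc g * bcirc h = bcirc (gconv g h) := by
  ext u v
  rw [Matrix.mul_apply]
  rw [Fintype.sum_prod_type]
  unfold bcirc gconv
  rw [Matrix.sum_apply]
  refine Fintype.sum_equiv (Equiv.subRight u.1) _ _ (fun l => ?_)
  rw [Matrix.mul_apply]
  refine Finset.sum_congr rfl (fun z _ => ?_)
  simp only [Equiv.subRight_apply]
  congr 2
  ring

lemma bcirc_transpose (g : ZMod p → Matrix (Fin 2) (Fin 2) 𝔽) :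
    (bcirc g)ᵀ = bcirc (fun a => (g (-a))ᵀ) := by
  ext u v
  unfold bcirc
  show g (u.1 - v.1) v.2 u.2 = (g (-(v.1 - u.1)))ᵀ u.2 v.2
  rw [neg_sub]
  rfl

lemma bcirc_trace (g : ZMod p → Matrix (Fin 2) (Fin 2) 𝔽) (hp : (p : 𝔽) = 0) :
    Matrix.trace (bcirc g) = 0 := by
  have hdiag : ∀ x : ZMod p × Fin 2, Matrix.diag (bcirc g) x = g 0 x.2 x.2 := fun x => by
    simp [Matrix.diag_apply, bcirc]
  unfold Matrix.trace
  rw [Fintype.sum_prod_type]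
  simp only [hdiag]
  rw [Finset.sum_const]
  simp only [Finset.card_univ, ZMod.card]
  rw [show (Finset.univ.sum fun x : Fin 2 => g 0 x x) = Matrix.trace (g 0) from rfl]
  rw [nsmul_eq_mul]
  simp [hp]

lemma bcirc_neg (g : ZMod p → Matrix (Fin 2) (Fin 2) 𝔽) : bcirc (fun a => -(g a)) = - bcirc g := by
  ext u v; simp [bcirc]

end BC

section Emb
variable {𝔽 : Type} [Field 𝔽] {p n m : ℕ} [NeZero p]
variable (e : (ZMod p × Fin 2) ⊕ Fin m ≃ Fin n)

def emb (B : Matrix (ZMod p × Fin 2) (ZMod p × Fin 2) 𝔽) : Matrix (Fin n) (Fin n) 𝔽 :=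
  (Matrix.fromBlocks B 0 0 0).submatrix e.symm e.symm

lemma emb_mul (B C : Matrix (ZMod p × Fin 2) (ZMod p × Fin 2) 𝔽) :
    emb e B * emb e C = emb e (B * C) := by
  unfold emb
  rw [Matrix.submatrix_mul_equiv]
  congr 1
  rw [Matrix.fromBlocks_multiply]
  simp

lemma emb_transpose (B : Matrix (ZMod p × Fin 2) (ZMod p × Fin 2) 𝔽) :
    (emb e B)ᵀ = emb e Bᵀ := by
  unfold emb
  rw [Matrix.transpose_submatrix, Matrix.fromBlocks_transpose]
  simp

lemma emb_trace (B : Matrix (ZMod p × Fin 2) (ZMod p × Fin 2) 𝔽) :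
    Matrix.trace (emb e B) = Matrix.trace B := by
  unfold emb
  have : Matrix.trace ((Matrix.fromBlocks B 0 0 0).submatrix e.symm e.symm)
      = Matrix.trace (Matrix.fromBlocks B (0 : Matrix _ (Fin m) 𝔽) 0 (0 : Matrix (Fin m) (Fin m) 𝔽)) := by
    unfold Matrix.trace
    refine Fintype.sum_equiv e.symm _ _ (fun i => rfl)
  rw [this]
  unfold Matrix.trace
  rw [Fintype.sum_sum_type]
  simp [Matrix.fromBlocks, Matrix.diag_apply]

lemma emb_neg (B : Matrix (ZMod p × Fin 2) (ZMod p × Fin 2) 𝔽) : emb e (-B) = - emb e B := by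
  unfold emb
  ext i j
  simp [Matrix.submatrix_apply]
  rcases h1 : e.symm i with u | u <;> rcases h2 : e.symm j with v | v <;>
    simp [Matrix.fromBlocks, h1, h2]

lemma emb_entry (B : Matrix (ZMod p × Fin 2) (ZMod p × Fin 2) 𝔽) (u v : ZMod p × Fin 2) :
    emb e B (e (Sum.inl u)) (e (Sum.inl v)) = B u v := by
  unfold emb
  simp [Matrix.submatrix_apply]

/-- the Blocky predicate -/
def Blocky (M : Matrix (Fin n) (Fin n) 𝔽) : Prop := ∃ g, M = emb e (bcirc g)

lemma Blocky.mul {M N : Matrix (Fin n) (Fin n) 𝔽} (hM : Blocky e M) (hN : Blocky e N) :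
    Blocky e (M * N) := by
  obtain ⟨g, rfl⟩ := hM
  obtain ⟨h, rfl⟩ := hN
  exact ⟨gconv g h, by rw [emb_mul, bcirc_mul]⟩

lemma Blocky.transpose {M : Matrix (Fin n) (Fin n) 𝔽} (hM : Blocky e M) : Blocky e Mᵀ := by
  obtain ⟨g, rfl⟩ := hM
  exact ⟨_, by rw [emb_transpose, bcirc_transpose]⟩

lemma Blocky.trace_eq_zero {M : Matrix (Fin n) (Fin n) 𝔽} (hM : Blocky e M)
    (hp : (p : 𝔽) = 0) : Matrix.trace M = 0 := by
  obtain ⟨g, rfl⟩ := hM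
  rw [emb_trace, bcirc_trace _ hp]

end Emb
end
open Matrix

noncomputable section

lemma trace_stdBasis_mul {𝔽 : Type} [Field 𝔽] {n : ℕ} (i j : Fin n) (M : Matrix (Fin n) (Fin n) 𝔽) :
    Matrix.trace (Matrix.single i j 1 * M) = M j i := by
  unfold Matrix.trace
  rw [Finset.sum_eq_single i]
  · simp [Matrix.diag_apply]
  · intro a _ ha
    simp [Matrix.diag_apply, Matrix.single_mul_apply_of_ne (h := ha)]
  · simp

section Concrete
variable {𝔽 : Type} [Field 𝔽] {p n m : ℕ} [NeZero p]
variable (e : (ZMod p × Fin 2) ⊕ Fin m ≃ Fin n)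

def Jmat : Matrix (Fin 2) (Fin 2) 𝔽 := !![0, 1; -1, 0]
def Qmat : Matrix (Fin 2) (Fin 2) 𝔽 := !![1, 0; 0, 0]

def g0 : ZMod p → Matrix (Fin 2) (Fin 2) 𝔽 := fun a => if a = 0 then Jmat else 0
def gE : ZMod p → Matrix (Fin 2) (Fin 2) 𝔽 := fun a => if a = 0 then 1 else 0
def g1 : ZMod p → Matrix (Fin 2) (Fin 2) 𝔽 :=
  fun a => if a = 1 then Qmat else if a = -1 then -Qmat else 0

def S0 : Matrix (Fin n) (Fin n) 𝔽 := emb e (bcirc g0)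
def S1 : Matrix (Fin n) (Fin n) 𝔽 := emb e (bcirc g1)
def Emat : Matrix (Fin n) (Fin n) 𝔽 := emb e (bcirc gE)
def Kmat : Matrix (Fin n) (Fin n) 𝔽 :=
  Matrix.single (e (Sum.inl ((1 : ZMod p), (0 : Fin 2)))) (e (Sum.inl ((0 : ZMod p), (0 : Fin 2)))) 1
    - Matrix.single (e (Sum.inl ((0 : ZMod p), (0 : Fin 2)))) (e (Sum.inl ((1 : ZMod p), (0 : Fin 2)))) 1

lemma Jmat_mul_Jmat : (Jmat : Matrix (Fin 2) (Fin 2) 𝔽) * Jmat = -1 := by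
  unfold Jmat
  ext i j
  fin_cases i <;> fin_cases j <;> simp [Matrix.mul_apply, Fin.sum_univ_two, Matrix.one_apply]

lemma Jmat_transpose : (Jmat : Matrix (Fin 2) (Fin 2) 𝔽)ᵀ = -Jmat := by
  unfold Jmat
  ext i j
  fin_cases i <;> fin_cases j <;> simp

lemma Qmat_transpose : (Qmat : Matrix (Fin 2) (Fin 2) 𝔽)ᵀ = Qmat := by
  unfold Qmat
  ext i j
  fin_cases i <;> fin_cases j <;> simp

section pbig
variable (hp3 : 3 ≤ p)
include hp3

lemma zmod_one_ne_zero : (1 : ZMod p) ≠ 0 := by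
  haveI : Fact (1 < p) := ⟨by omega⟩
  exact one_ne_zero

lemma zmod_neg_one_ne_zero : (-1 : ZMod p) ≠ 0 := by
  simpa [neg_eq_zero] using zmod_one_ne_zero hp3

lemma zmod_one_ne_neg_one : (1 : ZMod p) ≠ -1 := by
  intro h
  have h2 : ((2 : ℕ) : ZMod p) = 0 := by push_cast; linear_combination h
  rw [ZMod.natCast_eq_zero_iff] at h2
  have := Nat.le_of_dvd (by norm_num) h2
  omega

lemma S0_transpose : (S0 e)ᵀ = -(S0 (𝔽 := 𝔽) e) := by
  unfold S0
  rw [emb_transpose, bcirc_transpose, ← emb_neg, ← bcirc_neg]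
  have hfun : (fun a => ((g0 (-a) : Matrix (Fin 2) (Fin 2) 𝔽))ᵀ) = (fun a : ZMod p => -(g0 a : Matrix (Fin 2) (Fin 2) 𝔽)) := by
    funext a
    by_cases h : a = 0
    · simp [h, g0, Jmat_transpose]
    · have : -a ≠ 0 := by simpa [neg_eq_zero] using h
      simp [g0, h, this]
  rw [hfun]

lemma S1_transpose : (S1 e)ᵀ = -(S1 (𝔽 := 𝔽) e) := by
  unfold S1
  rw [emb_transpose, bcirc_transpose, ← emb_neg, ← bcirc_neg]
  have hfun : (fun a => ((g1 (-a) : Matrix (Fin 2) (Fin 2) 𝔽))ᵀ) = (fun a : ZMod p => -(g1 a : Matrix (Fin 2) (Fin 2) 𝔽)) := by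
    funext a
    by_cases h1 : a = 1
    · have hne : -a ≠ 1 := by
        rw [h1]
        intro hcon
        exact (zmod_one_ne_neg_one hp3) (by linear_combination -hcon)
      have hmo : -a = -1 := by rw [h1]
      have hne2 : (-1 : ZMod p) ≠ 1 := fun h => (zmod_one_ne_neg_one hp3) h.symm
      simp [g1, h1, hne, hmo, hne2, Qmat_transpose]
    · by_cases h2 : a = -1
      · have hone : -a = 1 := by rw [h2]; simp
        have hne2 : (-1 : ZMod p) ≠ 1 := fun h => (zmod_one_ne_neg_one hp3) h.symm
        simp [g1, h1, h2, hone, hne2, Qmat_transpose]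
      · have hn1 : -a ≠ 1 := fun h => h2 (by linear_combination -h)
        have hn2 : -a ≠ -1 := fun h => h1 (by linear_combination -h)
        simp [g1, h1, h2, hn1, hn2]
  rw [hfun]

lemma Kmat_transpose : (Kmat e)ᵀ = -(Kmat (𝔽 := 𝔽) e) := by
  unfold Kmat
  rw [Matrix.transpose_sub]
  have h : ∀ (i j : Fin n), (Matrix.single i j (1:𝔽))ᵀ = Matrix.single j i 1 := by
    intro i j
    ext a b
    simp [Matrix.single, and_comm]
  rw [h, h]
  abel

lemma S0_mul_S0 : S0 e * S0 e = -(Emat (𝔽 := 𝔽) e) := by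
  unfold S0 Emat
  rw [emb_mul, bcirc_mul, ← emb_neg, ← bcirc_neg]
  have hfun : gconv g0 g0 = (fun a : ZMod p => -(gE a : Matrix (Fin 2) (Fin 2) 𝔽)) := by
    funext b
    unfold gconv
    rw [Finset.sum_eq_single 0]
    · by_cases h : b = 0
      · simp [h, g0, gE, Jmat_mul_Jmat]
      · simp [g0, gE, h]
    · intro a _ ha
      simp [g0, ha]
    · simp
  rw [hfun]

lemma Emat_mul_Emat : Emat e * Emat e = (Emat (𝔽 := 𝔽) e) := by
  unfold Emat
  rw [emb_mul, bcirc_mul]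
  have hfun : gconv gE gE = (gE : ZMod p → Matrix (Fin 2) (Fin 2) 𝔽) := by
    funext b
    unfold gconv
    rw [Finset.sum_eq_single 0]
    · by_cases h : b = 0 <;> simp [gE, h]
    · intro a _ ha
      simp [gE, ha]
    · simp
  rw [hfun]

lemma S1_mul_Emat : S1 e * Emat e = (S1 (𝔽 := 𝔽) e) := by
  unfold S1 Emat
  rw [emb_mul, bcirc_mul]
  have hfun : gconv g1 gE = (g1 : ZMod p → Matrix (Fin 2) (Fin 2) 𝔽) := by
    funext b
    unfold gconv
    rw [Finset.sum_eq_single b]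
    · simp [gE]
    · intro a _ ha
      have : b - a ≠ 0 := fun h => ha (by linear_combination -h)
      simp [gE, this]
    · simp
  rw [hfun]

lemma trace_Kmat_mul_S1 : Matrix.trace (Kmat (𝔽 := 𝔽) (p := p) (n := n) (m := m) e * S1 (𝔽 := 𝔽) (p := p) (n := n) (m := m) e) = (2 : 𝔽) := by
  unfold Kmat
  rw [Matrix.sub_mul, Matrix.trace_sub, trace_stdBasis_mul, trace_stdBasis_mul]
  unfold S1
  rw [emb_entry, emb_entry]
  unfold bcirc
  have e1 : ((1,(0:Fin 2)) : ZMod p × Fin 2).1 - ((0,(0:Fin 2)) : ZMod p × Fin 2).1 = 1 := by simp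
  have e2 : ((0,(0:Fin 2)) : ZMod p × Fin 2).1 - ((1,(0:Fin 2)) : ZMod p × Fin 2).1 = -1 := by simp
  rw [e1, e2]
  have h1 : (1 : ZMod p) ≠ -1 := zmod_one_ne_neg_one hp3
  have h2 : (-1 : ZMod p) ≠ 1 := fun h => h1 h.symm
  simp [g1, h2, Qmat]
  ring

end pbig
end Concrete
end
open Matrix

noncomputable section

section Main
variable {𝔽 : Type} [Field 𝔽] {p n m d : ℕ} [NeZero p]
variable (e : (ZMod p × Fin 2) ⊕ Fin m ≃ Fin n)

/-- the matrices to substitute -/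
def Amat (d : ℕ) : Fin d → Matrix (Fin n) (Fin n) 𝔽 := fun k =>
  if (k : ℕ) = 0 then Kmat e else if (k : ℕ) = 1 then S1 e else S0 e

/-- the substitution homomorphism -/
def Phi : Rpoly 𝔽 n d →ₐ[𝔽] MvPolynomial (Fin d) 𝔽 :=
  MvPolynomial.aeval (fun q : Fin n × Fin n × Fin d =>
    MvPolynomial.X q.2.2 * MvPolynomial.C (Amat e d q.2.2 q.1 q.2.1))

lemma hX_mono (k : Fin d) : (MvPolynomial.X k : MvPolynomial (Fin d) 𝔽)
    = MvPolynomial.monomial (Finsupp.single k 1) 1 := rfl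

lemma map_matrix_mul (M N : Matrix (Fin n) (Fin n) (Rpoly 𝔽 n d)) :
    (M * N).map (Phi e) = M.map (Phi e) * N.map (Phi e) := by
  ext i j
  simp [Matrix.mul_apply, Matrix.map_apply, map_sum, _root_.map_mul]

lemma Phi_Xgen (k : Fin d) :
    (Xgen 𝔽 n d k).map (Phi e) = (MvPolynomial.X k : MvPolynomial (Fin d) 𝔽) •
      (Amat e d k).map (algebraMap 𝔽 (MvPolynomial (Fin d) 𝔽)) := by
  ext i j
  simp [Xgen, Phi, Matrix.map_apply, Matrix.smul_apply, MvPolynomial.algebraMap_eq,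
    smul_eq_mul]

lemma Phi_Xgen_transpose (k : Fin d) :
    ((Xgen 𝔽 n d k)ᵀ).map (Phi e) = (MvPolynomial.X k : MvPolynomial (Fin d) 𝔽) •
      ((Amat e d k)ᵀ).map (algebraMap 𝔽 (MvPolynomial (Fin d) 𝔽)) := by
  ext i j
  simp [Xgen, Phi, Matrix.map_apply, Matrix.smul_apply, Matrix.transpose_apply,
    MvPolynomial.algebraMap_eq, smul_eq_mul]

variable (hd0 : 0 < d) (hp3 : 3 ≤ p)

lemma Amat_blocky (k : Fin d) (hk : (k : ℕ) ≠ 0) : Blocky e (Amat (𝔽 := 𝔽) e d k) := by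
  unfold Amat
  rw [if_neg hk]
  by_cases h1 : (k : ℕ) = 1
  · rw [if_pos h1]; exact ⟨(g1 : ZMod p → Matrix (Fin 2) (Fin 2) 𝔽), rfl⟩
  · rw [if_neg h1]; exact ⟨(g0 : ZMod p → Matrix (Fin 2) (Fin 2) 𝔽), rfl⟩

lemma Amat_transpose_blocky (k : Fin d) (hk : (k : ℕ) ≠ 0) : Blocky e ((Amat (𝔽 := 𝔽) e d k)ᵀ) :=
  (Amat_blocky e k hk).transpose _

include hd0 in
/-- word image lemma -/
lemma word_image (w : List (Matrix (Fin n) (Fin n) (Rpoly 𝔽 n d)))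
    (hw : ∀ mm ∈ w, (∃ k, mm = Xgen 𝔽 n d k) ∨ (∃ k, mm = (Xgen 𝔽 n d k)ᵀ)) :
    ∃ (τ : Fin d →₀ ℕ) (N : Matrix (Fin n) (Fin n) 𝔽),
      (w.prod).map (Phi e) = (MvPolynomial.monomial τ (1:𝔽)) •
        N.map (algebraMap 𝔽 (MvPolynomial (Fin d) 𝔽)) ∧
      (w = [] → τ = 0) ∧
      (w ≠ [] → (τ ≠ 0 ∧ ((τ ⟨0, hd0⟩ = 0) → Blocky e N))) := by
  induction w with
  | nil =>
    refine ⟨0, 1, ?_, fun _ => rfl, fun h => absurd rfl h⟩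
    rw [List.prod_nil]
    rw [Matrix.map_one (Phi e) (map_zero _) (map_one _), MvPolynomial.monomial_zero',
      Matrix.map_one (algebraMap 𝔽 (MvPolynomial (Fin d) 𝔽)) (map_zero _) (map_one _),
      MvPolynomial.C_1, one_smul]
  | cons head tail ih =>
    obtain ⟨τ₂, N₂, h2eq, h2nil, h2cons⟩ := ih (fun mm hm => hw mm (List.mem_cons_of_mem _ hm))
    have hhead := hw head (List.mem_cons_self)
    have hex : ∃ (k : Fin d) (N₁ : Matrix (Fin n) (Fin n) 𝔽),
        head.map (Phi e) = (MvPolynomial.X k : MvPolynomial (Fin d) 𝔽) •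
          N₁.map (algebraMap 𝔽 (MvPolynomial (Fin d) 𝔽)) ∧ ((k : ℕ) ≠ 0 → Blocky e N₁) := by
      rcases hhead with ⟨k, rfl⟩ | ⟨k, rfl⟩
      · exact ⟨k, Amat e d k, Phi_Xgen e k, fun hk => Amat_blocky e k hk⟩
      · exact ⟨k, (Amat e d k)ᵀ, Phi_Xgen_transpose e k, fun hk => Amat_transpose_blocky e k hk⟩
    obtain ⟨k, N₁, h1eq, h1b⟩ := hex
    have hsing : ∀ z : Fin d, (Finsupp.single k (1:ℕ)) z = 0 → (k : ℕ) ≠ (z : ℕ) := by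
      intro z hz hkz
      have : k = z := Fin.ext hkz
      rw [this, Finsupp.single_eq_same] at hz
      exact one_ne_zero hz
    by_cases htail : tail = []
    · subst htail
      refine ⟨Finsupp.single k 1, N₁, ?_, by simp, fun _ => ⟨?_, fun hz => ?_⟩⟩
      · rw [List.prod_cons, List.prod_nil, mul_one, h1eq, hX_mono]
      · exact fun h0 => one_ne_zero ((Finsupp.single_eq_zero).mp h0)
      · exact h1b (hsing _ hz)
    · refine ⟨Finsupp.single k 1 + τ₂, N₁ * N₂, ?_, by simp, fun _ => ⟨?_, fun hz => ?_⟩⟩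
      · rw [List.prod_cons, map_matrix_mul, h1eq, h2eq, Matrix.smul_mul, Matrix.mul_smul,
          ← Matrix.map_mul, smul_smul, hX_mono, MvPolynomial.monomial_mul, one_mul]
      · intro h0
        have := DFunLike.congr_fun h0 k
        simp [Finsupp.single_eq_same] at this
      · rw [Finsupp.add_apply] at hz
        have hz1 : (Finsupp.single k (1:ℕ)) ⟨0, hd0⟩ = 0 := by omega
        have hz2 : τ₂ ⟨0, hd0⟩ = 0 := by omega
        exact Blocky.mul e (h1b (hsing _ hz1)) ((h2cons htail).2 hz2)

end Main
end
open Matrix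

noncomputable section

section Main2
variable {𝔽 : Type} [Field 𝔽] {p n m d : ℕ} [NeZero p]
variable (e : (ZMod p × Fin 2) ⊕ Fin m ≃ Fin n)

lemma list_smul_prod {nn : ℕ} {T : Type*} [CommRing T] {ι : Type*} (l : List ι) (c : ι → T)
    (M : ι → Matrix (Fin nn) (Fin nn) T) :
    (l.map (fun i => c i • M i)).prod = (l.map c).prod • (l.map M).prod := by
  induction l with
  | nil => simp
  | cons a l ih =>
    rw [List.map_cons, List.prod_cons, List.map_cons, List.prod_cons, List.map_cons,
      List.prod_cons, ih, Matrix.smul_mul, Matrix.mul_smul, smul_smul]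

lemma map_list_prod'' {nn : ℕ} {𝔽 : Type} [Field 𝔽] {T : Type*} [CommRing T] (f : 𝔽 →+* T)
    (l : List (Matrix (Fin nn) (Fin nn) 𝔽)) :
    (l.prod).map f = (l.map (fun M => M.map f)).prod := by
  induction l with
  | nil =>
    rw [List.prod_nil, List.map_nil, List.prod_nil,
      Matrix.map_one f (map_zero f) (map_one f)]
  | cons a l ih =>
    rw [List.prod_cons, List.map_cons, List.prod_cons, ← ih]
    ext i j
    simp [Matrix.mul_apply, Matrix.map_apply, map_sum, _root_.map_mul]

lemma map_matrix_sub {nn : ℕ} {𝔽 : Type} [Field 𝔽] {T : Type*} [CommRing T] (f : 𝔽 →+* T)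
    (M N : Matrix (Fin nn) (Fin nn) 𝔽) :
    (M - N).map f = M.map f - N.map f := by
  ext i j
  simp [Matrix.map_apply, Matrix.sub_apply, map_sub]

/-- the subalgebra of "good" polynomials -/
def Csub (𝔽 : Type) [Field 𝔽] (d : ℕ) (z : Fin d) : Subalgebra 𝔽 (MvPolynomial (Fin d) 𝔽) where
  carrier := {q | ∀ μ : Fin d →₀ ℕ, μ ≠ 0 → μ z = 0 → (∀ k, μ k ≤ 1) →
    MvPolynomial.coeff μ q = 0}
  mul_mem' := by
    intro a b ha hb μ hμ0 hμz hμ1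
    rw [MvPolynomial.coeff_mul]
    refine Finset.sum_eq_zero (fun x hx => ?_)
    rw [Finset.HasAntidiagonal.mem_antidiagonal] at hx
    by_cases h1 : x.1 = 0
    · have h2 : x.2 = μ := by rw [← hx, h1, zero_add]
      rw [h2, hb μ hμ0 hμz hμ1, mul_zero]
    · have hx1z : x.1 z = 0 := by
        have h := DFunLike.congr_fun hx z
        rw [Finsupp.add_apply] at h
        omega
      have hx11 : ∀ k, x.1 k ≤ 1 := by
        intro k
        have h := DFunLike.congr_fun hx k
        rw [Finsupp.add_apply] at h
        have := hμ1 k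
        omega
      rw [ha x.1 h1 hx1z hx11, zero_mul]
  add_mem' := by
    intro a b ha hb μ hμ0 hμz hμ1
    rw [MvPolynomial.coeff_add, ha μ hμ0 hμz hμ1, hb μ hμ0 hμz hμ1, add_zero]
  algebraMap_mem' := by
    intro r μ hμ0 hμz hμ1
    rw [MvPolynomial.algebraMap_eq, MvPolynomial.coeff_C, if_neg (fun h => hμ0 h.symm)]

variable (hd0 : 0 < d) (hp3 : 3 ≤ p)

include hd0 hp3 in
lemma gen_in_Csub (hpF : (p : 𝔽) = 0) (t : ℕ) (ht1 : 1 ≤ t) (htn : t ≤ n)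
    (w : List (Matrix (Fin n) (Fin n) (Rpoly 𝔽 n d))) (hwne : w ≠ [])
    (hw : ∀ mm ∈ w, (∃ k, mm = Xgen 𝔽 n d k) ∨ (∃ k, mm = (Xgen 𝔽 n d k)ᵀ)) :
    Phi e (sigmaCoeff t w.prod) ∈ Csub 𝔽 d ⟨0, hd0⟩ := by
  obtain ⟨τ, N, heq, _, hcons⟩ := word_image e hd0 w hw
  obtain ⟨hτ0, hτb⟩ := hcons hwne
  have hc0 : (MvPolynomial.monomial τ (1:𝔽)) ≠ 0 := by
    rw [Ne, MvPolynomial.monomial_eq_zero]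
    exact one_ne_zero
  set T := MvPolynomial (Fin d) 𝔽
  set v : 𝔽 := N.charpoly.coeff (n - t) with hv
  have key : Phi e (sigmaCoeff t w.prod)
      = MvPolynomial.monomial (t • τ) ((-1)^t * v) := by
    unfold sigmaCoeff
    rw [_root_.map_mul, map_pow, map_neg, _root_.map_one]
    have hcp : (w.prod.map (Phi e)).charpoly = w.prod.charpoly.map (Phi e).toRingHom :=
      Matrix.charpoly_map w.prod (Phi e).toRingHom
    have h1 : Phi e (w.prod.charpoly.coeff (n - t))
        = ((w.prod.map (Phi e)).charpoly).coeff (n - t) := by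
      rw [hcp, Polynomial.coeff_map]
      rfl
    rw [h1, heq]
    have h2 := charpoly_smul_coeff (MvPolynomial.monomial τ (1:𝔽)) hc0
      (N.map (algebraMap 𝔽 T)) (n - t) (by omega)
    rw [h2]
    have h3 : (N.map (algebraMap 𝔽 T)).charpoly.coeff (n - t) = MvPolynomial.C v := by
      rw [Matrix.charpoly_map N (algebraMap 𝔽 T), Polynomial.coeff_map, hv]
      rfl
    rw [h3]
    have h4 : n - (n - t) = t := by omega
    rw [h4, MvPolynomial.monomial_pow, one_pow]
    have h5 : ((-1 : T))^t = MvPolynomial.C ((-1 : 𝔽)^t) := by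
      rw [map_pow, map_neg, MvPolynomial.C_1]
    rw [h5, mul_comm (MvPolynomial.monomial (t • τ) 1) (MvPolynomial.C v), ← mul_assoc,
      ← MvPolynomial.C_mul, MvPolynomial.C_mul_monomial, mul_one]
  rw [key]
  intro μ hμ0 hμz hμ1
  rw [MvPolynomial.coeff_monomial]
  split_ifs with hEq
  · obtain ⟨k₀, hk₀⟩ : ∃ k₀, τ k₀ ≠ 0 := by
      by_contra hc
      push_neg at hc
      exact hτ0 (Finsupp.ext (fun k => hc k))
    have hμk : μ k₀ = t * τ k₀ := by
      rw [← hEq, Finsupp.smul_apply, smul_eq_mul]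
    have ht : t = 1 := by
      have := hμ1 k₀
      nlinarith [Nat.one_le_iff_ne_zero.mpr hk₀]
    subst ht
    have hτμ : τ = μ := by rw [← hEq, one_smul]
    have hτz : τ ⟨0, hd0⟩ = 0 := by rw [hτμ]; exact hμz
    have htr := (hτb hτz).trace_eq_zero e hpF
    haveI : Nonempty (Fin n) := ⟨⟨0, by omega⟩⟩
    have hco : N.charpoly.coeff (n - 1) = - Matrix.trace N := by
      have h := Matrix.trace_eq_neg_charpoly_coeff N
      rw [Fintype.card_fin] at h
      rw [h, neg_neg]
    rw [hv, hco, htr, neg_zero, mul_zero]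
  · rfl

include hd0 hp3 in
lemma invO_image (hpF : (p : 𝔽) = 0) : ∀ g ∈ invO 𝔽 n d,
    Phi e g ∈ Csub 𝔽 d ⟨0, hd0⟩ := by
  intro g hg
  have hle : invO 𝔽 n d ≤ (Csub 𝔽 d ⟨0, hd0⟩).comap (Phi e) := by
    apply Algebra.adjoin_le
    rintro f ⟨t, ht1, htn, w, hwne, hw, rfl⟩
    exact gen_in_Csub e hd0 hp3 hpF t ht1 htn w hwne hw
  exact hle hg

lemma Phi_constantCoeff (g : Rpoly 𝔽 n d) :
    MvPolynomial.constantCoeff (Phi e g) = MvPolynomial.constantCoeff g := by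
  have hhom : ((MvPolynomial.constantCoeff).comp (Phi e).toRingHom : Rpoly 𝔽 n d →+* 𝔽)
      = MvPolynomial.constantCoeff := by
    apply MvPolynomial.ringHom_ext
    · intro a
      simp [Phi]
    · intro q
      simp [Phi]
  exact DFunLike.congr_fun hhom g

lemma map_list_prod' (l : List (Matrix (Fin n) (Fin n) (Rpoly 𝔽 n d))) :
    (l.prod).map (Phi e) = (l.map (fun M => M.map (Phi e))).prod := by
  induction l with
  | nil =>
    rw [List.prod_nil, List.map_nil, List.prod_nil,
      Matrix.map_one (Phi e) (map_zero _) (map_one _)]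
  | cons a l ih =>
    rw [List.prod_cons, List.map_cons, List.prod_cons, map_matrix_mul, ih]


include hp3 in
lemma Amat_skew (k : Fin d) : (Amat (𝔽 := 𝔽) e d k)ᵀ = - Amat (𝔽 := 𝔽) e d k := by
  unfold Amat
  split_ifs with h1 h2
  · exact Kmat_transpose e hp3
  · exact S1_transpose e hp3
  · exact S0_transpose e hp3

include hp3 in
lemma Emat_pow_succ (r : ℕ) : (Emat (𝔽 := 𝔽) e) ^ (r + 1) = Emat e := by
  induction r with
  | zero => rw [pow_one]
  | succ s ih => rw [pow_succ, ih, Emat_mul_Emat e hp3]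

end Main2
end

theorem trace_prod_diff_transpose_indecomposable
    (𝔽 : Type) [Field 𝔽] [Infinite 𝔽] (n d : ℕ) (hn : 2 ≤ n) (hd : 1 ≤ d) (hdeven : Even d)
    (hp0 : 0 < ringChar 𝔽) (hpn : 2 * ringChar 𝔽 ≤ n) (hp2 : ringChar 𝔽 ≠ 2) :
    ¬ Decomposable 𝔽 (invO 𝔽 n d)
      (Matrix.trace (List.ofFn (fun k : Fin d =>
        Xgen 𝔽 n d k - (Xgen 𝔽 n d k)ᵀ)).prod) := by
  classical
  intro hdec
  haveI : CharP 𝔽 (ringChar 𝔽) := ringChar.charP 𝔽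
  have hp1 : ringChar 𝔽 ≠ 1 := CharP.char_ne_one 𝔽 (ringChar 𝔽)
  have hp3 : 3 ≤ ringChar 𝔽 := by omega
  haveI : NeZero (ringChar 𝔽) := ⟨by omega⟩
  have hpF : ((ringChar 𝔽 : ℕ) : 𝔽) = 0 := CharP.cast_eq_zero 𝔽 (ringChar 𝔽)
  have h2F : (2 : 𝔽) ≠ 0 := by
    intro h
    have h2 : ((2 : ℕ) : 𝔽) = 0 := by push_cast; exact h
    rw [CharP.cast_eq_zero_iff 𝔽 (ringChar 𝔽) 2] at h2
    have := Nat.le_of_dvd (by norm_num) h2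
    omega
  obtain ⟨dd, rfl⟩ : ∃ dd, d = dd + 2 := by
    obtain ⟨r, hr⟩ := hdeven
    exact ⟨d - 2, by omega⟩
  obtain ⟨mm, hmm⟩ : ∃ mm, dd = 2 * mm := by
    obtain ⟨r, hr⟩ := hdeven
    exact ⟨r - 1, by omega⟩
  have hd0 : 0 < dd + 2 := by omega
  have hcard : Fintype.card ((ZMod (ringChar 𝔽) × Fin 2) ⊕ Fin (n - 2 * ringChar 𝔽))
      = Fintype.card (Fin n) := by
    rw [Fintype.card_sum, Fintype.card_prod, ZMod.card, Fintype.card_fin, Fintype.card_fin,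
      Fintype.card_fin]
    omega
  set e : (ZMod (ringChar 𝔽) × Fin 2) ⊕ Fin (n - 2 * ringChar 𝔽) ≃ Fin n :=
    Fintype.equivOfCardEq hcard with he
  set T := MvPolynomial (Fin (dd + 2)) 𝔽 with hT
  set z : Fin (dd + 2) := ⟨0, hd0⟩ with hzdef
  set mustar : Fin (dd + 2) →₀ ℕ := ∑ k : Fin (dd + 2), Finsupp.single k 1 with hmustar
  have hmustar_apply : ∀ k, mustar k = 1 := by
    intro k
    rw [hmustar]
    have hsum := map_sum (Finsupp.applyAddHom (M := ℕ) k)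
      (fun j : Fin (dd + 2) => Finsupp.single j 1) Finset.univ
    simp only [Finsupp.applyAddHom_apply] at hsum
    rw [hsum, Finset.sum_eq_single k (fun b _ hb => Finsupp.single_eq_of_ne' hb) (by simp)]
    exact Finsupp.single_eq_same
  -- Step 1 : the functional kills the span
  have hlam0 : MvPolynomial.coeff mustar (Phi e (Matrix.trace (List.ofFn (fun k : Fin (dd + 2) =>
      Xgen 𝔽 n (dd + 2) k - (Xgen 𝔽 n (dd + 2) k)ᵀ)).prod)) = 0 := by
    refine Submodule.span_induction ?_ ?_ ?_ ?_ hdec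
    · rintro x ⟨g, hg, h, hh, ⟨i, hi, hgi⟩, ⟨j, hj, hhj⟩, rfl⟩
      rw [_root_.map_mul, MvPolynomial.coeff_mul]
      refine Finset.sum_eq_zero (fun q hq => ?_)
      rw [Finset.HasAntidiagonal.mem_antidiagonal] at hq
      have hcc : ∀ (u : Rpoly 𝔽 n (dd + 2)) (iu : ℕ), 0 < iu → u.IsHomogeneous iu →
          MvPolynomial.coeff 0 (Phi e u) = 0 := by
        intro u iu hiu hu
        have h1 : MvPolynomial.constantCoeff (Phi e u) = MvPolynomial.constantCoeff u :=
          Phi_constantCoeff e u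
        rw [MvPolynomial.constantCoeff_eq] at h1
        rw [h1]
        refine hu.coeff_eq_zero ?_
        rw [map_zero]
        omega
      by_cases h1 : q.1 = 0
      · rw [h1, hcc g i hi hgi, zero_mul]
      · by_cases h2 : q.2 = 0
        · rw [h2, hcc h j hj hhj, mul_zero]
        · have hsplit : ∀ k, q.1 k ≤ 1 ∧ q.2 k ≤ 1 := by
            intro k
            have hk := DFunLike.congr_fun hq k
            rw [Finsupp.add_apply] at hk
            have := hmustar_apply k
            omega
          by_cases hz1 : q.1 z = 0
          · have hmem := invO_image e hd0 hp3 hpF g hg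
            rw [hmem q.1 h1 hz1 (fun k => (hsplit k).1), zero_mul]
          · have hz2 : q.2 z = 0 := by
              have hk := DFunLike.congr_fun hq z
              rw [Finsupp.add_apply] at hk
              have := hmustar_apply z
              omega
            have hmem := invO_image e hd0 hp3 hpF h hh
            rw [hmem q.2 h2 hz2 (fun k => (hsplit k).2), mul_zero]
    · rw [map_zero, MvPolynomial.coeff_zero]
    · intro x y _ _ hx hy
      rw [map_add, MvPolynomial.coeff_add, hx, hy, add_zero]
    · intro a x _ hx
      rw [_root_.map_smul, MvPolynomial.coeff_smul, hx, smul_zero]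
  -- Step 2 : compute the value of the functional on f
  set Aa : Fin (dd + 2) → Matrix (Fin n) (Fin n) 𝔽 := Amat (𝔽 := 𝔽) e (dd + 2) with hAa
  have hPhi_trace : ∀ M : Matrix (Fin n) (Fin n) (Rpoly 𝔽 n (dd + 2)),
      Phi e (Matrix.trace M) = Matrix.trace (M.map (Phi e)) := by
    intro M
    unfold Matrix.trace
    rw [map_sum]
    rfl
  have hfac : ∀ k : Fin (dd + 2), (Xgen 𝔽 n (dd + 2) k - (Xgen 𝔽 n (dd + 2) k)ᵀ).map (Phi e)
      = (MvPolynomial.X k : T) • (((2 : 𝔽) • Aa k).map (algebraMap 𝔽 T)) := by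
    intro k
    have hsub : (Xgen 𝔽 n (dd + 2) k - (Xgen 𝔽 n (dd + 2) k)ᵀ).map (Phi e)
        = (Xgen 𝔽 n (dd + 2) k).map (Phi e) - ((Xgen 𝔽 n (dd + 2) k)ᵀ).map (Phi e) := by
      ext i j
      simp [Matrix.map_apply, Matrix.sub_apply, map_sub]
    have hskew : Aa k - (Aa k)ᵀ = (2 : 𝔽) • Aa k := by
      rw [hAa, Amat_skew e hp3 k, sub_neg_eq_add, two_smul]
    rw [hsub, Phi_Xgen, Phi_Xgen_transpose, ← smul_sub, ← map_matrix_sub (algebraMap 𝔽 T), hskew]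
  have hmono : (List.ofFn (fun k : Fin (dd + 2) => (MvPolynomial.X k : T))).prod
      = MvPolynomial.monomial mustar (1 : 𝔽) := by
    rw [List.prod_ofFn]
    have hsupp : mustar.support = Finset.univ :=
      Finset.eq_univ_iff_forall.mpr (fun k => Finsupp.mem_support_iff.mpr
        (by rw [hmustar_apply k]; exact one_ne_zero))
    have := MvPolynomial.prod_X_pow_eq_monomial (s := mustar) (R := 𝔽)
    rw [hsupp] at this
    rw [← this]
    exact Finset.prod_congr rfl (fun x _ => by rw [hmustar_apply x, pow_one])
  have hval : Phi e (Matrix.trace (List.ofFn (fun k : Fin (dd + 2) =>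
      Xgen 𝔽 n (dd + 2) k - (Xgen 𝔽 n (dd + 2) k)ᵀ)).prod)
      = MvPolynomial.monomial mustar
          (Matrix.trace ((List.ofFn (fun k => (2 : 𝔽) • Aa k)).prod)) := by
    rw [hPhi_trace, map_list_prod' e, List.map_ofFn]
    have hcomp : ((fun M => M.map (Phi e)) ∘ (fun k : Fin (dd + 2) =>
        Xgen 𝔽 n (dd + 2) k - (Xgen 𝔽 n (dd + 2) k)ᵀ))
        = fun k => (MvPolynomial.X k : T) • (((2 : 𝔽) • Aa k).map (algebraMap 𝔽 T)) := by
      funext k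
      exact hfac k
    rw [hcomp]
    have hpull : (List.ofFn (fun k : Fin (dd + 2) =>
        (MvPolynomial.X k : T) • (((2 : 𝔽) • Aa k).map (algebraMap 𝔽 T)))).prod
        = (List.ofFn (fun k : Fin (dd + 2) => (MvPolynomial.X k : T))).prod •
          (List.ofFn (fun k : Fin (dd + 2) => ((2 : 𝔽) • Aa k).map (algebraMap 𝔽 T))).prod := by
      rw [List.ofFn_eq_map, List.ofFn_eq_map, List.ofFn_eq_map]
      exact list_smul_prod _ _ _
    rw [hpull, hmono]
    have hmaplist : (List.ofFn (fun k : Fin (dd + 2) =>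
        ((2 : 𝔽) • Aa k).map (algebraMap 𝔽 T))).prod
        = ((List.ofFn (fun k : Fin (dd + 2) => (2 : 𝔽) • Aa k)).prod).map (algebraMap 𝔽 T) := by
      rw [map_list_prod'' (algebraMap 𝔽 T), List.map_ofFn]
      rfl
    rw [hmaplist, Matrix.trace_smul]
    have htrmap : Matrix.trace (((List.ofFn (fun k : Fin (dd + 2) =>
        (2 : 𝔽) • Aa k)).prod).map (algebraMap 𝔽 T))
        = algebraMap 𝔽 T (Matrix.trace ((List.ofFn (fun k : Fin (dd + 2) =>
            (2 : 𝔽) • Aa k)).prod)) := by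
      unfold Matrix.trace
      rw [map_sum]
      rfl
    rw [htrmap, MvPolynomial.algebraMap_eq, smul_eq_mul, mul_comm,
      MvPolynomial.C_mul_monomial, mul_one]
  -- Step 3 : the trace value
  have htrval : Matrix.trace ((List.ofFn (fun k : Fin (dd + 2) => (2 : 𝔽) • Aa k)).prod)
      = (2 : 𝔽) ^ (dd + 2) * ((-1 : 𝔽) ^ mm * 2) := by
    have hpull2 : (List.ofFn (fun k : Fin (dd + 2) => (2 : 𝔽) • Aa k)).prod
        = ((2 : 𝔽) ^ (dd + 2)) • (List.ofFn Aa).prod := by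
      rw [List.ofFn_eq_map, List.ofFn_eq_map (f := Aa)]
      rw [list_smul_prod (List.finRange (dd + 2)) (fun _ => (2 : 𝔽)) Aa]
      congr 1
      rw [← List.ofFn_eq_map, List.prod_ofFn, Finset.prod_const, Finset.card_univ,
        Fintype.card_fin]
    have hlist : List.ofFn Aa = Kmat e :: S1 e :: List.replicate dd (S0 e) := by
      rw [List.ofFn_succ, List.ofFn_succ]
      have h0 : Aa 0 = Kmat e := by
        rw [hAa]; unfold Amat; simp
      have h1 : Aa ((0 : Fin (dd + 1)).succ) = S1 e := by
        rw [hAa]; unfold Amat; simp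
      have h2 : (List.ofFn fun i : Fin dd => Aa i.succ.succ) = List.replicate dd (S0 e) := by
        have hfun : (fun i : Fin dd => Aa i.succ.succ) = (fun _ : Fin dd => S0 e) := by
          funext i
          have hv1 : ((i.succ.succ : Fin (dd + 2)) : ℕ) ≠ 0 := by simp [Fin.val_succ]
          have hv2 : ((i.succ.succ : Fin (dd + 2)) : ℕ) ≠ 1 := by simp [Fin.val_succ]
          rw [hAa]; unfold Amat
          rw [if_neg hv1, if_neg hv2]
        rw [hfun, List.ofFn_const]
      rw [h0, h1, h2]
    rw [hpull2, hlist, List.prod_cons, List.prod_cons, List.prod_replicate, Matrix.trace_smul]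
    have hS0pow : (S0 (𝔽 := 𝔽) e) ^ dd = ((-1 : 𝔽) ^ mm) • (Emat e) ^ mm := by
      rw [hmm, pow_mul, pow_two, S0_mul_S0 e hp3, ← neg_one_smul 𝔽 (Emat (𝔽 := 𝔽) e), _root_.smul_pow]
    rw [hS0pow]
    have htr2 : Matrix.trace (Kmat (𝔽 := 𝔽) e * (S1 e * (((-1 : 𝔽) ^ mm) • (Emat e) ^ mm)))
        = (-1 : 𝔽) ^ mm * 2 := by
      cases mm with
      | zero =>
        rw [pow_zero, pow_zero, one_smul, mul_one, trace_Kmat_mul_S1 e hp3, one_mul]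
      | succ r =>
        rw [Emat_pow_succ e hp3 r, Matrix.mul_smul, Matrix.mul_smul, Matrix.trace_smul,
          S1_mul_Emat e hp3, trace_Kmat_mul_S1 e hp3, smul_eq_mul]
    rw [htr2, smul_eq_mul]
  rw [hval] at hlam0
  rw [MvPolynomial.coeff_monomial, if_pos rfl, htrval] at hlam0
  have : (2 : 𝔽) ^ (dd + 2) * ((-1 : 𝔽) ^ mm * 2) ≠ 0 :=
    mul_ne_zero (pow_ne_zero _ h2F)
      (mul_ne_zero (pow_ne_zero _ (neg_ne_zero.mpr one_ne_zero)) h2F)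
  exact this hlam0

end
end
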